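/- Let (X, ‖·‖) be a Banach space, L: X → X a bounded linear operator with ‖L(x)‖ ≤ λ‖x‖ for all x ∈ X and some λ ∈ [0,1), and B: X × X → X a bilinear map with ‖B(x₁,x₂)‖ ≤ η‖x₁‖‖x₂‖ for some η > 0. Then for every y ∈ X with 4η‖y‖ < (1-λ)², the equation x = y + L(x) + B(x,x) has a solution x ∈ X satisfying ‖x‖ ≤ 2‖y‖/(1-λ), and this solution is unique among all solutions with ‖x‖ < (1-λ)/(2η). -/

import Mathlib

/-- **Banach fixed point with a linear perturbation.**
If `L` is a bounded linear operator with `‖L x‖ ≤ λ ‖x‖`, `λ ∈ [0,1)`, and `B` is a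
bilinear map with `‖B x₁ x₂‖ ≤ η ‖x₁‖ ‖x₂‖`, then for every `y` with `4η‖y‖ < (1-λ)²`
the equation `x = y + L x + B x x` has a solution with `‖x‖ ≤ 2‖y‖/(1-λ)`, unique among
all solutions with `‖x‖ < (1-λ)/(2η)`. -/
theorem stmt_7
    {X : Type*} [NormedAddCommGroup X] [NormedSpace ℝ X] [CompleteSpace X]
    (L : X →ₗ[ℝ] X) (lam : ℝ) (hlam0 : 0 ≤ lam) (hlam1 : lam < 1)
    (hL : ∀ x : X, ‖L x‖ ≤ lam * ‖x‖)
    (B : X →ₗ[ℝ] X →ₗ[ℝ] X) (η : ℝ) (hη : 0 < η)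
    (hB : ∀ x₁ x₂ : X, ‖B x₁ x₂‖ ≤ η * ‖x₁‖ * ‖x₂‖)
    (y : X) (hy : 4 * η * ‖y‖ < (1 - lam) ^ 2) :
    ∃ x : X, x = y + L x + B x x ∧ ‖x‖ ≤ 2 * ‖y‖ / (1 - lam) ∧
      ∀ x' : X, x' = y + L x' + B x' x' → ‖x'‖ < (1 - lam) / (2 * η) → x' = x := by
  have h1 : (0:ℝ) < 1 - lam := by linarith
  set r : ℝ := 2 * ‖y‖ / (1 - lam) with hr
  have hr0 : 0 ≤ r := by positivity
  have hrla : (1 - lam) * r = 2 * ‖y‖ := by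
    rw [hr]; field_simp
  have hηr : 2 * η * r < 1 - lam := by
    have h2 : (2 * η * r) * (1 - lam) = 4 * η * ‖y‖ := by
      rw [hr]; field_simp; ring
    nlinarith [sq_nonneg (1 - lam)]
  -- the contraction constant
  have hk0 : 0 ≤ lam + 2 * η * r := by positivity
  set k : NNReal := ⟨lam + 2 * η * r, hk0⟩ with hkdef
  have hk1 : k < 1 := by
    rw [← NNReal.coe_lt_coe]
    simp only [hkdef, NNReal.coe_mk, NNReal.coe_one]
    exact (show lam + 2 * η * r < 1 by linarith)
  -- the invariant ball
  set S : Set X := Metric.closedBall (0 : X) r with hS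
  have hmem : ∀ x : X, x ∈ S ↔ ‖x‖ ≤ r := by
    intro x; rw [hS, Metric.mem_closedBall, dist_zero_right]
  have hmaps : ∀ x : X, ‖x‖ ≤ r → ‖y + L x + B x x‖ ≤ r := by
    intro x hx
    have h3 : ‖y + L x + B x x‖ ≤ ‖y‖ + ‖L x‖ + ‖B x x‖ := norm_add₃_le
    have h4 := hL x
    have h5 := hB x x
    have hxn : 0 ≤ ‖x‖ := norm_nonneg x
    have ha : lam * ‖x‖ ≤ lam * r := by gcongr
    have hbx : η * ‖x‖ * ‖x‖ ≤ η * r * r := by gcongr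
    have hc : η * r * r ≤ ‖y‖ := by nlinarith [mul_le_mul_of_nonneg_right hηr.le hr0]
    linarith
  haveI : CompleteSpace S := IsClosed.completeSpace_coe (hs := Metric.isClosed_closedBall)
  haveI : Nonempty S := ⟨⟨0, by rw [hmem]; simpa using hr0⟩⟩
  set f : S → S := fun x => ⟨y + L x.1 + B x.1 x.1, by
    rw [hmem]; exact hmaps x.1 ((hmem x.1).1 x.2)⟩ with hf
  have hlip : ∀ a b : S, dist (f a) (f b) ≤ k * dist a b := by
    rintro ⟨a, ha⟩ ⟨b, hb⟩
    have ha' : ‖a‖ ≤ r := (hmem a).1 ha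
    have hb' : ‖b‖ ≤ r := (hmem b).1 hb
    have hdist : dist (f ⟨a, ha⟩) (f ⟨b, hb⟩) = ‖(y + L a + B a a) - (y + L b + B b b)‖ := by
      rw [Subtype.dist_eq, dist_eq_norm]
    rw [hdist, Subtype.dist_eq, dist_eq_norm]
    have hdecomp : (y + L a + B a a) - (y + L b + B b b)
        = L (a - b) + (B (a - b) a + B b (a - b)) := by
      simp only [map_sub, LinearMap.sub_apply]
      abel
    rw [hdecomp]
    have h3 : ‖L (a - b) + (B (a - b) a + B b (a - b))‖
        ≤ ‖L (a - b)‖ + (‖B (a - b) a‖ + ‖B b (a - b)‖) :=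
      (norm_add_le _ _).trans (by gcongr; exact norm_add_le _ _)
    have h4 := hL (a - b)
    have h5 := hB (a - b) a
    have h6 := hB b (a - b)
    have hkc : (k : ℝ) = lam + 2 * η * r := rfl
    rw [hkc]
    have hab : 0 ≤ ‖a - b‖ := norm_nonneg _
    show ‖L (a - b) + (B (a - b) a + B b (a - b))‖ ≤ (lam + 2 * η * r) * ‖a - b‖
    have h7 : η * ‖a - b‖ * ‖a‖ ≤ η * ‖a - b‖ * r := by gcongr
    have h8 : η * ‖b‖ * ‖a - b‖ ≤ η * r * ‖a - b‖ := by gcongr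
    nlinarith
  have hcontr : ContractingWith k f :=
    ⟨hk1, LipschitzWith.of_dist_le_mul hlip⟩
  set x : S := hcontr.fixedPoint f with hx
  have hfix : f x = x := hcontr.fixedPoint_isFixedPt
  refine ⟨x.1, ?_, ?_, ?_⟩
  · have := congrArg Subtype.val hfix
    simpa [hf] using this.symm
  · exact (hmem x.1).1 x.2
  · intro x' hx' hx'norm
    have hxeq : (x : X) = y + L x.1 + B x.1 x.1 := by
      have := congrArg Subtype.val hfix
      simpa [hf] using this.symm
    have hxr : ‖(x : X)‖ ≤ r := (hmem x.1).1 x.2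
    have hdecomp : x' - (x : X) = L (x' - x.1) + (B (x' - x.1) x' + B x.1 (x' - x.1)) := by
      conv_lhs => rw [hx', hxeq]
      simp only [map_sub, LinearMap.sub_apply]
      abel
    have h3 : ‖x' - (x:X)‖ ≤ ‖L (x' - x.1)‖ + (‖B (x' - x.1) x'‖ + ‖B x.1 (x' - x.1)‖) := by
      conv_lhs => rw [hdecomp]
      have t1 := norm_add_le (L (x' - x.1)) (B (x' - x.1) x' + B x.1 (x' - x.1))
      have t2 := norm_add_le (B (x' - x.1) x') (B x.1 (x' - x.1))
      linarith
    have h4 := hL (x' - x.1)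
    have h5 := hB (x' - x.1) x'
    have h6 := hB x.1 (x' - x.1)
    have hηx : η * ‖(x:X)‖ < (1 - lam) / 2 := by
      have : η * ‖(x:X)‖ ≤ η * r := by gcongr
      nlinarith
    have hηx' : η * ‖x'‖ < (1 - lam) / 2 := by
      rw [lt_div_iff₀ (by positivity)] at hx'norm
      nlinarith
    have hd0 : ‖x' - (x:X)‖ = 0 := by
      by_contra hne
      have hpos : 0 < ‖x' - (x:X)‖ := lt_of_le_of_ne (norm_nonneg _) (Ne.symm hne)
      nlinarith [mul_lt_mul_of_pos_left hηx hpos, mul_lt_mul_of_pos_left hηx' hpos]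
    exact sub_eq_zero.1 (norm_eq_zero.1 hd0)
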